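/- arXiv:2402.16214 — 5 statements merged into one kernel-verified Lean document; each statement's English description precedes it below -/
import Mathlib

section
/- Let f be a strongly homogeneous polynomial of order type a in k[x_1,...,x_d] with f(𝟏) = 0. Then the principal symmetric ideal (f)_{S_d} is strictly contained in the ideal (R_a) generated by all monomials of order type a; in particular no monomial of order type a belongs to (f)_{S_d}. -/
open MvPolynomial

def symOrbit {k : Type*} [CommSemiring k] {d : ℕ} (f : MvPolynomial (Fin d) k) :
    Set (MvPolynomial (Fin d) k) :=
  Set.range (fun σ : Equiv.Perm (Fin d) => rename σ f)

noncomputable def psi {k : Type*} [CommSemiring k] {d : ℕ} (f : MvPolynomial (Fin d) k) :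
    Ideal (MvPolynomial (Fin d) k) :=
  Ideal.span (symOrbit f)

/-- The order type of an exponent vector: the multiset of its values. Two exponent vectors
have the same order type iff one is a permutation of the other. -/
def orderTypeF {d : ℕ} (s : Fin d → ℕ) : Multiset ℕ :=
  Multiset.map s Finset.univ.val

def orderType {d : ℕ} (s : Fin d →₀ ℕ) : Multiset ℕ :=
  orderTypeF (s : Fin d → ℕ)

lemma orderType_mapDomain {d : ℕ} (σ : Equiv.Perm (Fin d)) (m : Fin d →₀ ℕ) :
    orderType (Finsupp.mapDomain σ m) = orderType m := by
  unfold orderType orderTypeF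
  have hco : ((Finsupp.mapDomain σ m : Fin d →₀ ℕ) : Fin d → ℕ) = m ∘ σ.symm := by
    funext i
    simp [Finsupp.mapDomain_equiv_apply]
  rw [hco]
  have : (Finset.univ.val.map (σ.symm : Fin d → Fin d)) = Finset.univ.val := by
    have := Finset.map_univ_equiv σ.symm
    calc (Finset.univ.val.map (σ.symm : Fin d → Fin d))
        = (Finset.univ.map σ.symm.toEmbedding).val := rfl
      _ = Finset.univ.val := by rw [Finset.map_univ_equiv]
  calc Multiset.map (⇑m ∘ ⇑σ.symm) Finset.univ.val
      = Multiset.map m (Finset.univ.val.map (σ.symm : Fin d → Fin d)) := by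
        rw [Multiset.map_map]
    _ = Multiset.map m Finset.univ.val := by rw [this]

theorem strongly_homogeneous_eval_one_zero {k : Type*} [Field k] {d : ℕ}
    (f : MvPolynomial (Fin d) k) (a : Fin d → ℕ) (ha : Antitone a)
    (hstr : ∀ m ∈ f.support, orderType m = orderTypeF a)
    (h1 : eval (fun _ => (1 : k)) f = 0) :
    psi f < Ideal.span {p : MvPolynomial (Fin d) k |
        ∃ s : Fin d →₀ ℕ, orderType s = orderTypeF a ∧ p = monomial s 1} ∧
      ∀ s : Fin d →₀ ℕ, orderType s = orderTypeF a → (monomial s 1 : MvPolynomial (Fin d) k) ∉ psi f := by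
  set S : Set (MvPolynomial (Fin d) k) :=
    {p : MvPolynomial (Fin d) k | ∃ s : Fin d →₀ ℕ, orderType s = orderTypeF a ∧ p = monomial s 1}
  -- psi f ⊆ kernel of evaluation at 1
  have hker : ∀ g ∈ psi f, eval (fun _ => (1 : k)) g = 0 := by
    intro g hg
    have hle : psi f ≤ RingHom.ker (eval (fun _ => (1 : k))) := by
      apply Ideal.span_le.mpr
      rintro p ⟨σ, rfl⟩
      simp only [SetLike.mem_coe, RingHom.mem_ker]
      rw [eval_rename]
      exact h1
    exact hle hg
  have hnotmem : ∀ s : Fin d →₀ ℕ, orderType s = orderTypeF a →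
      (monomial s 1 : MvPolynomial (Fin d) k) ∉ psi f := by
    intro s _ hmem
    have := hker _ hmem
    rw [eval_monomial] at this
    simp at this
  refine ⟨?_, hnotmem⟩
  -- inclusion
  have hle : psi f ≤ Ideal.span S := by
    apply Ideal.span_le.mpr
    rintro p ⟨σ, rfl⟩
    show (rename (σ : Fin d → Fin d) f) ∈ (Ideal.span S : Set _)
    rw [(rename (σ : Fin d → Fin d) f).as_sum]
    apply Ideal.sum_mem
    intro m hm
    rw [mem_support_iff] at hm
    -- m is in support of rename σ f, so m = mapDomain σ m' for some m' ∈ f.support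
    have hm' : ∃ m' ∈ f.support, Finsupp.mapDomain σ m' = m := by
      by_contra hcon
      push_neg at hcon
      apply hm
      rw [coeff_rename_eq_zero _ _ _ ?_]
      intro u hu
      by_contra huc
      exact hcon u (mem_support_iff.mpr huc) hu
    obtain ⟨m', hm'supp, rfl⟩ := hm'
    have hot : orderType (Finsupp.mapDomain σ m') = orderTypeF a := by
      rw [orderType_mapDomain]; exact hstr m' hm'supp
    have : (monomial (Finsupp.mapDomain σ m') (coeff (Finsupp.mapDomain σ m') (rename σ f))
        : MvPolynomial (Fin d) k)
        = C (coeff (Finsupp.mapDomain σ m') (rename σ f)) * monomial (Finsupp.mapDomain σ m') 1 := by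
      rw [C_mul_monomial, mul_one]
    rw [this]
    exact Ideal.mul_mem_left _ _ (Ideal.subset_span ⟨_, hot, rfl⟩)
  refine lt_of_le_of_ne hle ?_
  intro heq
  -- the monomial with exponent a is in the span but not in psi f
  set s₀ : Fin d →₀ ℕ := Finsupp.equivFunOnFinite.symm a
  have hs₀ : orderType s₀ = orderTypeF a := by
    unfold orderType
    congr 1
  have : (monomial s₀ 1 : MvPolynomial (Fin d) k) ∈ psi f := by
    rw [heq]
    exact Ideal.subset_span ⟨s₀, hs₀, rfl⟩
  exact hnotmem s₀ hs₀ this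
end

section
/- Let I = (f)_{S_d} be a principal symmetric ideal where f is homogeneous and not k-symmetric, and let J = (g_1,...,g_m) be a homogeneous ideal generated in a single degree. Then the minimal number of generators satisfies μ(IJ) ≥ μ(J) + 1. -/
open MvPolynomial

def kSymmetric {k : Type*} [CommSemiring k] {d : ℕ} (f : MvPolynomial (Fin d) k) : Prop :=
  ∀ σ : Equiv.Perm (Fin d), ∃ c : k, c ≠ 0 ∧ rename σ f = c • f

/-- The minimal number of generators of an ideal. -/
noncomputable def mu {k : Type*} [CommSemiring k] {d : ℕ}
    (I : Ideal (MvPolynomial (Fin d) k)) : ℕ :=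
  sInf {n : ℕ | ∃ S : Finset (MvPolynomial (Fin d) k),
    S.card = n ∧ Ideal.span (S : Set (MvPolynomial (Fin d) k)) = I}

section Aux

variable {k : Type*} [Field k] {d : ℕ}

/-- homogeneous component of a product with a homogeneous polynomial -/
lemma aux_hc_mul {D : ℕ} {t : MvPolynomial (Fin d) k} (ht : t.IsHomogeneous D)
    (c : MvPolynomial (Fin d) k) (j : ℕ) :
    homogeneousComponent j (c * t) =
      if D ≤ j then homogeneousComponent (j - D) c * t else 0 := by
  conv_lhs => rw [← sum_homogeneousComponent c]
  rw [Finset.sum_mul, map_sum]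
  have hmem : ∀ l : ℕ, homogeneousComponent l c * t ∈
      homogeneousSubmodule (Fin d) k (l + D) :=
    fun l => (mem_homogeneousSubmodule _ _).2
      ((homogeneousComponent_isHomogeneous l c).mul ht)
  rw [Finset.sum_congr rfl (fun l _ => homogeneousComponent_of_mem (hmem l))]
  by_cases hD : D ≤ j
  · have hiff : ∀ l : ℕ, (j = l + D) ↔ (l = j - D) := fun l => by omega
    simp_rw [hiff]
    rw [Finset.sum_ite_eq' (Finset.range (c.totalDegree + 1)) (j - D)
      (fun l => homogeneousComponent l c * t), if_pos hD]
    split_ifs with hmem2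
    · rfl
    · rw [homogeneousComponent_eq_zero, zero_mul]
      simp only [Finset.mem_range, not_lt] at hmem2
      omega
  · rw [if_neg hD]
    apply Finset.sum_eq_zero; intro l _
    rw [if_neg]; omega

lemma aux_hc_low_mul {D : ℕ} {x : MvPolynomial (Fin d) k}
    (hx : ∀ j < D, homogeneousComponent j x = 0) (a : MvPolynomial (Fin d) k) :
    (∀ j < D, homogeneousComponent j (a * x) = 0) ∧
      homogeneousComponent D (a * x) =
        C (coeff 0 a) * homogeneousComponent D x := by
  have expand : ∀ jj : ℕ, homogeneousComponent jj (a * x) =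
      ∑ j' ∈ Finset.range (x.totalDegree + 1),
        (if j' ≤ jj then homogeneousComponent (jj - j') a * homogeneousComponent j' x else 0) := by
    intro jj
    conv_lhs => rw [← sum_homogeneousComponent x]
    rw [Finset.mul_sum, map_sum]
    exact Finset.sum_congr rfl fun j' _ =>
      aux_hc_mul (homogeneousComponent_isHomogeneous j' x) a jj
  constructor
  · intro j hj; rw [expand j]
    apply Finset.sum_eq_zero; intro j' _
    split_ifs with hle
    · rw [hx j' (lt_of_le_of_lt hle hj), mul_zero]
    · rfl
  · rw [expand D]
    have hcongr : ∀ j' ∈ Finset.range (x.totalDegree + 1),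
        (if j' ≤ D then homogeneousComponent (D - j') a * homogeneousComponent j' x else 0) =
        (if j' = D then C (coeff 0 a) * homogeneousComponent D x else 0) := by
      intro j' _
      rcases lt_trichotomy j' D with h | h | h
      · rw [if_pos h.le, hx j' h, mul_zero, if_neg h.ne]
      · subst h; rw [if_pos le_rfl, if_pos rfl, Nat.sub_self, homogeneousComponent_zero]
      · rw [if_neg (not_le.2 h), if_neg h.ne']
    rw [Finset.sum_congr rfl hcongr, Finset.sum_ite_eq' _ D _]
    split_ifs with hmem
    · rfl
    · have hz : homogeneousComponent D x = 0 := by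
        apply homogeneousComponent_eq_zero
        simp only [Finset.mem_range, not_lt] at hmem
        omega
      rw [hz, mul_zero]

lemma aux_span_comp {D : ℕ} {T : Set (MvPolynomial (Fin d) k)}
    (hT : ∀ t ∈ T, t ∈ homogeneousSubmodule (Fin d) k D)
    {s : MvPolynomial (Fin d) k} (hs : s ∈ Ideal.span T) :
    (∀ j < D, homogeneousComponent j s = 0) ∧
      homogeneousComponent D s ∈ Submodule.span k T := by
  rw [← Ideal.submodule_span_eq] at hs
  refine Submodule.span_induction (p := fun x _ =>
    (∀ j < D, homogeneousComponent j x = 0) ∧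
      homogeneousComponent D x ∈ Submodule.span k T) ?_ ?_ ?_ ?_ hs
  · intro t ht
    constructor
    · intro j hj; rw [homogeneousComponent_of_mem (hT t ht), if_neg hj.ne]
    · rw [homogeneousComponent_of_mem (hT t ht), if_pos rfl]
      exact Submodule.subset_span ht
  · exact ⟨fun j _ => map_zero _, by rw [map_zero]; exact Submodule.zero_mem _⟩
  · rintro x y _ _ ⟨hx1, hx2⟩ ⟨hy1, hy2⟩
    exact ⟨fun j hj => by rw [map_add, hx1 j hj, hy1 j hj, add_zero],
      by rw [map_add]; exact Submodule.add_mem _ hx2 hy2⟩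
  · rintro a x _ ⟨hx1, hx2⟩
    show (∀ j < D, homogeneousComponent j (a • x) = 0) ∧
      homogeneousComponent D (a • x) ∈ Submodule.span k T
    rw [smul_eq_mul]
    obtain ⟨h1, h2⟩ := aux_hc_low_mul hx1 a
    refine ⟨h1, ?_⟩
    rw [h2, ← smul_eq_C_mul]
    exact Submodule.smul_mem _ _ hx2

lemma aux_dvd_of_span {h : MvPolynomial (Fin d) k} {s : Set (MvPolynomial (Fin d) k)}
    (hdvd : ∀ x ∈ s, h ∣ x) {v : MvPolynomial (Fin d) k}
    (hv : v ∈ Submodule.span k s) : h ∣ v := by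
  refine Submodule.span_induction (p := fun x _ => h ∣ x) hdvd (dvd_zero h)
    (fun x y _ _ => dvd_add) (fun c x _ hx => ?_) hv
  show h ∣ c • x
  rw [smul_eq_C_mul]; exact hx.mul_left _

lemma aux_eq_C_smul {n : ℕ} {f g u : MvPolynomial (Fin d) k}
    (hfh : f.IsHomogeneous n) (hgh : g.IsHomogeneous n) (hf0 : f ≠ 0)
    (hgu : g = f * u) (hg0 : g ≠ 0) : ∃ c : k, c ≠ 0 ∧ g = c • f := by
  have hu : ∀ j : ℕ, j ≠ 0 → homogeneousComponent j u = 0 := by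
    intro j hj
    have h1 : homogeneousComponent (n + j) g = 0 := by
      rw [homogeneousComponent_of_mem ((mem_homogeneousSubmodule _ _).2 hgh),
        if_neg (by omega)]
    rw [hgu, mul_comm] at h1
    rw [aux_hc_mul hfh u (n + j), if_pos (Nat.le_add_right n j)] at h1
    have hj' : n + j - n = j := by omega
    rw [hj'] at h1
    rcases mul_eq_zero.1 h1 with h | h
    · exact h
    · exact absurd h hf0
  have hu0 : u = C (coeff 0 u) := by
    conv_lhs => rw [← sum_homogeneousComponent u]
    rw [Finset.sum_eq_single 0 (fun b _ hb => hu b hb)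
      (fun h0 => absurd (Finset.mem_range.2 (Nat.succ_pos _)) h0),
      homogeneousComponent_zero]
  refine ⟨coeff 0 u, ?_, ?_⟩
  · intro hc0; apply hg0; rw [hgu, hu0, hc0, map_zero, mul_zero]
  · conv_lhs => rw [hgu, hu0]
    rw [smul_eq_C_mul, mul_comm]

end Aux

theorem mu_product_ge {k : Type*} [Field k] {d n e m : ℕ}
    (f : MvPolynomial (Fin d) k) (hfhom : f.IsHomogeneous n) (hf : ¬ kSymmetric f)
    (gs : Fin m → MvPolynomial (Fin d) k) (hgs : ∀ i, (gs i).IsHomogeneous e)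
    (J : Ideal (MvPolynomial (Fin d) k)) (hJ : J = Ideal.span (Set.range gs))
    (hJne : J ≠ ⊥) :
    mu (psi f * J) ≥ mu J + 1 := by
  classical
  set U : Set (MvPolynomial (Fin d) k) := ⋃ s ∈ symOrbit f, ⋃ t ∈ Set.range gs, {s * t} with hU
  have hPU : psi f * J = Ideal.span U := by
    rw [hJ, psi, Ideal.span_mul_span]
    congr 1; ext x; simp [hU, Set.mem_mul, eq_comm]
  have hUhom : ∀ u ∈ U, u ∈ homogeneousSubmodule (Fin d) k (n + e) := by
    intro u hu
    simp only [hU, Set.mem_iUnion, Set.mem_singleton_iff, symOrbit, Set.mem_range] at hu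
    obtain ⟨s, ⟨σ, rfl⟩, t, ⟨i, rfl⟩, rfl⟩ := hu
    exact (mem_homogeneousSubmodule _ _).2
      ((hfhom.rename_isHomogeneous).mul (hgs i))
  have hUfin : U.Finite := by
    apply Set.Finite.subset (Set.finite_range
      (fun p : Equiv.Perm (Fin d) × Fin m => rename p.1 f * gs p.2))
    intro u hu
    simp only [hU, Set.mem_iUnion, Set.mem_singleton_iff, symOrbit, Set.mem_range] at hu
    obtain ⟨s, ⟨σ, rfl⟩, t, ⟨i, rfl⟩, rfl⟩ := hu
    exact ⟨(σ, i), rfl⟩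
  set V : Submodule k (MvPolynomial (Fin d) k) := Submodule.span k (Set.range gs) with hV
  set W : Submodule k (MvPolynomial (Fin d) k) := Submodule.span k U with hW
  haveI instV : FiniteDimensional k V := FiniteDimensional.span_of_finite k (Set.finite_range gs)
  haveI instW : FiniteDimensional k W := FiniteDimensional.span_of_finite k hUfin
  -- Part A : mu J ≤ finrank V
  have partA : mu J ≤ Module.finrank k V := by
    let b := Module.finBasis k V
    have hinj : Function.Injective (fun i => ((b i : V) : (MvPolynomial (Fin d) k))) :=
      Subtype.val_injective.comp b.injective
    let S : Finset (MvPolynomial (Fin d) k) := Finset.image (fun i => ((b i : V) : (MvPolynomial (Fin d) k))) Finset.univ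
    have hcard : S.card = Module.finrank k V := by
      rw [Finset.card_image_of_injective _ hinj, Finset.card_univ, Fintype.card_fin]
    have hspanS : Submodule.span k (S : Set (MvPolynomial (Fin d) k)) = V := by
      have hco : (S : Set (MvPolynomial (Fin d) k)) = (V.subtype : V →ₗ[k] (MvPolynomial (Fin d) k)) '' Set.range b := by
        simp only [S, Finset.coe_image, Finset.coe_univ, Set.image_univ]
        rw [← Set.range_comp]
        rfl
      rw [hco, Submodule.span_image, b.span_eq, Submodule.map_top, Submodule.range_subtype]
    have hSJ : Ideal.span (S : Set (MvPolynomial (Fin d) k)) = J := by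
      rw [← Ideal.submodule_span_eq, ← Submodule.span_span_of_tower k (MvPolynomial (Fin d) k) (S : Set (MvPolynomial (Fin d) k)),
        hspanS, hV, Submodule.span_span_of_tower, Ideal.submodule_span_eq, hJ]
    exact Nat.sInf_le ⟨S, hcard, hSJ⟩
  -- Part B : finrank W ≤ mu (psi f * J)
  have partB : Module.finrank k W ≤ mu (psi f * J) := by
    have hfg : (psi f * J).FG := IsNoetherian.noetherian _
    obtain ⟨S0, hS0⟩ := hfg
    have hne : {n0 : ℕ | ∃ S : Finset (MvPolynomial (Fin d) k), S.card = n0 ∧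
        Ideal.span (S : Set (MvPolynomial (Fin d) k)) = psi f * J}.Nonempty :=
      ⟨S0.card, S0, rfl, by rw [← Ideal.submodule_span_eq]; exact hS0⟩
    obtain ⟨S, hcard, hspan⟩ := Nat.sInf_mem hne
    have key : W ≤ Submodule.span k
        ((fun s => homogeneousComponent (n + e) s) '' (S : Set (MvPolynomial (Fin d) k))) := by
      rw [hW]
      apply Submodule.span_le.2
      intro t ht
      have htP : t ∈ Submodule.span (MvPolynomial (Fin d) k) (S : Set (MvPolynomial (Fin d) k)) := by
        rw [Ideal.submodule_span_eq, hspan, hPU]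
        exact Ideal.subset_span ht
      obtain ⟨c, -, hc⟩ := Submodule.mem_span_finset.1 htP
      have ht' : homogeneousComponent (n + e) t = t := by
        rw [homogeneousComponent_of_mem (hUhom t ht), if_pos rfl]
      rw [← ht', ← hc, map_sum]
      apply Submodule.sum_mem
      intro s hsS
      have hsP : s ∈ Ideal.span U := by
        rw [← hPU, ← hspan]
        exact Ideal.subset_span hsS
      have hlow := (aux_span_comp hUhom hsP).1
      rw [smul_eq_mul, (aux_hc_low_mul hlow (c s)).2, ← smul_eq_C_mul]
      exact Submodule.smul_mem _ _ (Submodule.subset_span ⟨s, hsS, rfl⟩)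
    haveI : FiniteDimensional k (Submodule.span k
        ((fun s => homogeneousComponent (n + e) s) '' (S : Set (MvPolynomial (Fin d) k)))) :=
      FiniteDimensional.span_of_finite k (S.finite_toSet.image _)
    calc Module.finrank k W
        ≤ Module.finrank k (Submodule.span k
            ((fun s => homogeneousComponent (n + e) s) '' (S : Set (MvPolynomial (Fin d) k)))) :=
          Submodule.finrank_mono key
      _ ≤ (S.image (fun s => homogeneousComponent (n + e) s)).card := by
          have := finrank_span_finset_le_card (R := k) (S.image (fun s => homogeneousComponent (n + e) s))
          rw [Set.finrank, Finset.coe_image] at this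
          exact this
      _ ≤ S.card := Finset.card_image_le
      _ = mu (psi f * J) := hcard
  -- Part C : finrank V + 1 ≤ finrank W
  have partC : Module.finrank k V + 1 ≤ Module.finrank k W := by
    by_contra hcon
    push_neg at hcon
    have hWV : Module.finrank k W ≤ Module.finrank k V := by omega
    apply hf
    intro σ
    by_cases hf0 : f = 0
    · exact ⟨1, one_ne_zero, by rw [hf0, map_zero, smul_zero]⟩
    letI : StrongNormalizationMonoid (MvPolynomial (Fin d) k) := UniqueFactorizationMonoid.normalizationMonoid
    letI : StrongNormalizedGCDMonoid (MvPolynomial (Fin d) k) := UniqueFactorizationMonoid.toStrongNormalizedGCDMonoid (MvPolynomial (Fin d) k)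
    set L : Equiv.Perm (Fin d) → Submodule k (MvPolynomial (Fin d) k) :=
      fun τ => Submodule.map (LinearMap.mulLeft k (rename τ f)) V with hL
    have hτ0 : ∀ τ : Equiv.Perm (Fin d), rename (⇑τ) f ≠ 0 := by
      intro τ h
      exact hf0 (rename_injective (⇑τ) τ.injective (by rw [h, map_zero]))
    have hLW : ∀ τ, L τ = W := by
      intro τ
      have hinj : Function.Injective (LinearMap.mulLeft k (rename (⇑τ) f)) := by
        intro a b hab
        simp only [LinearMap.mulLeft_apply] at hab
        exact mul_left_cancel₀ (hτ0 τ) hab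
      have hle : L τ ≤ W := by
        rw [hL]
        simp only
        rw [hV, Submodule.map_span]
        apply Submodule.span_le.2
        rintro _ ⟨_, ⟨i, rfl⟩, rfl⟩
        apply Submodule.subset_span
        simp only [hU, Set.mem_iUnion, Set.mem_singleton_iff, symOrbit, Set.mem_range,
          LinearMap.mulLeft_apply]
        exact ⟨rename (⇑τ) f, ⟨τ, rfl⟩, gs i, ⟨i, rfl⟩, rfl⟩
      have hfr : Module.finrank k (L τ) = Module.finrank k V :=
        (LinearEquiv.finrank_eq (Submodule.equivMapOfInjective _ hinj V)).symm
      exact Submodule.eq_of_le_of_finrank_le hle (hWV.trans hfr.symm.le)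
    have hre1 : rename (⇑(1 : Equiv.Perm (Fin d))) f = f := by
      rw [Equiv.Perm.coe_one, rename_id, AlgHom.id_apply]
    have hex : ∃ i, gs i ≠ 0 := by
      by_contra hall
      push_neg at hall
      apply hJne
      rw [hJ, Ideal.span_eq_bot]
      rintro _ ⟨i, rfl⟩
      exact hall i
    obtain ⟨i0, hi0⟩ := hex
    set h : (MvPolynomial (Fin d) k) := Finset.univ.gcd gs with hhdef
    have hh0 : h ≠ 0 := by
      intro h0
      exact hi0 (Finset.gcd_eq_zero_iff.1 h0 i0 (Finset.mem_univ i0))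
    obtain ⟨g', hg', hgcd1⟩ := Finset.extract_gcd gs ⟨i0, Finset.mem_univ i0⟩
    have hdvdV : ∀ v ∈ V, h ∣ v := by
      intro v hv
      refine aux_dvd_of_span ?_ hv
      rintro _ ⟨i, rfl⟩
      exact ⟨g' i, hg' i (Finset.mem_univ i)⟩
    have step : ∀ p q : (MvPolynomial (Fin d) k),
        Submodule.map (LinearMap.mulLeft k p) V = Submodule.map (LinearMap.mulLeft k q) V →
        p ∣ q := by
      intro p q hmap
      have hpq : ∀ i : Fin m, p ∣ q * g' i := by
        intro i
        have hmem : q * gs i ∈ Submodule.map (LinearMap.mulLeft k q) V :=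
          ⟨gs i, Submodule.subset_span ⟨i, rfl⟩, by simp [LinearMap.mulLeft_apply]⟩
        rw [← hmap] at hmem
        obtain ⟨v, hv, hpv⟩ := hmem
        simp only [LinearMap.mulLeft_apply] at hpv
        obtain ⟨v', rfl⟩ := hdvdV v hv
        rw [hg' i (Finset.mem_univ i)] at hpv
        refine ⟨v', ?_⟩
        apply mul_left_cancel₀ hh0
        linear_combination -hpv
      have h1 : p ∣ Finset.univ.gcd (fun i => q * g' i) :=
        Finset.dvd_gcd (fun i _ => hpq i)
      rw [Finset.gcd_mul_left, hgcd1, mul_one] at h1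
      exact dvd_normalize_iff.1 h1
    have d2 : f ∣ rename (⇑σ) f := by
      apply step
      have e1 : L 1 = L σ := by rw [hLW, hLW]
      rw [hL] at e1
      simp only [hre1] at e1
      exact e1
    have hσhom : (rename (⇑σ) f).IsHomogeneous n := hfhom.rename_isHomogeneous
    obtain ⟨u, hu⟩ := d2
    exact aux_eq_C_smul hfhom hσhom hf0 hu (hτ0 σ)
  calc mu J + 1 ≤ Module.finrank k V + 1 := by omega
    _ ≤ Module.finrank k W := partC
    _ ≤ mu (psi f * J) := partB
end

section
/- Let a and b be partitions with d parts (weakly decreasing tuples in ℕ^d), neither of which is constant. Then there exists a permutation τ ∈ S_d such that the sorted rearrangement of a + τ·b differs from the sorted rearrangement of a + b; more precisely, if i is minimal with a_1 ≠ a_i and j ≥ i is minimal with b_1 ≠ b_j, then a + b has exactly i−1 entries equal to its maximum value a_1 + b_1, while a + (1 j)·b has exactly i−2 entries equal to a_1 + b_1. -/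
open Finset

theorem sum_of_partitions_order_types_differ {d : ℕ} (a b : Fin (d + 1) → ℕ)
    (ha : Antitone a) (hb : Antitone b)
    (hanc : ∃ l, a l ≠ a 0) (hbnc : ∃ l, b l ≠ b 0)
    (i j : Fin (d + 1))
    (hi : a i ≠ a 0) (himin : ∀ l, l < i → a l = a 0)
    (hj : b j ≠ b 0) (hjmin : ∀ l, l < j → b l = b 0)
    (hij : i ≤ j) :
    (∃ τ : Equiv.Perm (Fin (d + 1)),
        Multiset.map (fun l => a l + b (τ l)) Finset.univ.val ≠
          Multiset.map (fun l => a l + b l) Finset.univ.val) ∧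
      (Finset.univ.filter (fun l => a l + b l = a 0 + b 0)).card = (i : ℕ) ∧
      (Finset.univ.filter
          (fun l => a l + b (Equiv.swap 0 j l) = a 0 + b 0)).card = (i : ℕ) - 1 := by
  have hi0 : i ≠ 0 := by rintro rfl; exact hi rfl
  have hj0 : j ≠ 0 := by rintro rfl; exact hj rfl
  have haiff : ∀ l, a l = a 0 ↔ l < i := by
    intro l
    constructor
    · intro h
      by_contra hlt
      push_neg at hlt
      have : a l ≤ a i := ha hlt
      have hai : a i < a 0 := lt_of_le_of_ne (ha (Fin.zero_le i)) hi
      omega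
    · exact himin l
  have hbiff : ∀ l, b l = b 0 ↔ l < j := by
    intro l
    constructor
    · intro h
      by_contra hlt
      push_neg at hlt
      have : b l ≤ b j := hb hlt
      have hbj : b j < b 0 := lt_of_le_of_ne (hb (Fin.zero_le j)) hj
      omega
    · exact hjmin l
  have hsum : ∀ l, (a l + b l = a 0 + b 0) ↔ (a l = a 0 ∧ b l = b 0) := by
    intro l
    have h1 : a l ≤ a 0 := ha (Fin.zero_le l)
    have h2 : b l ≤ b 0 := hb (Fin.zero_le l)
    omega
  have hcard1 : (Finset.univ.filter (fun l => a l + b l = a 0 + b 0)).card = (i : ℕ) := by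
    have : (Finset.univ.filter (fun l => a l + b l = a 0 + b 0)) = Finset.Iio i := by
      ext l
      simp [hsum l, haiff l, hbiff l]
      exact fun h => lt_of_lt_of_le h hij
    rw [this, Fin.card_Iio]
  have hcard2 : (Finset.univ.filter
      (fun l => a l + b (Equiv.swap 0 j l) = a 0 + b 0)).card = (i : ℕ) - 1 := by
    have hset : (Finset.univ.filter (fun l => a l + b (Equiv.swap 0 j l) = a 0 + b 0))
        = (Finset.Iio i).erase 0 := by
      ext l
      simp only [Finset.mem_filter, Finset.mem_univ, true_and, Finset.mem_erase,
        Finset.mem_Iio]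
      constructor
      · intro h
        by_cases hl0 : l = 0
        · subst hl0
          rw [Equiv.swap_apply_left] at h
          have h1 : b j < b 0 := lt_of_le_of_ne (hb (Fin.zero_le j)) hj
          omega
        · by_cases hlj : l = j
          · subst hlj
            rw [Equiv.swap_apply_right] at h
            have hai : a i < a 0 := lt_of_le_of_ne (ha (Fin.zero_le i)) hi
            have : a l ≤ a i := ha hij
            omega
          · rw [Equiv.swap_apply_of_ne_of_ne hl0 hlj, hsum l, haiff l] at h
            exact ⟨hl0, h.1⟩
      · rintro ⟨hl0, hli⟩
        have hlj : l ≠ j := fun h => absurd (h ▸ hli) (not_lt.2 (h ▸ hij))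
        rw [Equiv.swap_apply_of_ne_of_ne hl0 hlj, hsum l, haiff l, hbiff l]
        exact ⟨hli, lt_of_lt_of_le hli hij⟩
    rw [hset, Finset.card_erase_of_mem (by simp [Fin.pos_of_ne_zero hi0]), Fin.card_Iio]
  refine ⟨⟨Equiv.swap 0 j, ?_⟩, hcard1, hcard2⟩
  intro h
  have hcnt := congrArg (Multiset.count (a 0 + b 0)) h
  rw [Multiset.count_map, Multiset.count_map] at hcnt
  rw [← Finset.filter_val, ← Finset.filter_val, ← Finset.card_def, ← Finset.card_def,
    Finset.filter_congr (fun x _ => (eq_comm : a 0 + b 0 = a x + b ((Equiv.swap 0 j) x) ↔ _)),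
    Finset.filter_congr (fun x _ => (eq_comm : a 0 + b 0 = a x + b x ↔ _)),
    hcard1, hcard2] at hcnt
  have hiv : (i : ℕ) ≠ 0 := Fin.val_ne_zero_iff.mpr hi0
  omega
end

section
/- Let f, g ∈ k[x_1,...,x_d] and let Stab_f = {σ ∈ S_d : σ·f = c f for some nonzero c ∈ k} and Stab_g defined analogously. If S_d = Stab_f · Stab_g (every element of S_d is a product of an element of Stab_f and an element of Stab_g), then (f)_{S_d} · (g)_{S_d} = (fg)_{S_d}. -/
open MvPolynomial

/-- The k-stabilizer of `f`: permutations sending `f` to a nonzero scalar multiple of itself. -/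
def kStab {k : Type*} [CommSemiring k] {d : ℕ} (f : MvPolynomial (Fin d) k) :
    Set (Equiv.Perm (Fin d)) :=
  {σ | ∃ c : k, c ≠ 0 ∧ rename σ f = c • f}

lemma rename_perm_mul {k : Type*} [CommSemiring k] {d : ℕ} (π ρ : Equiv.Perm (Fin d))
    (p : MvPolynomial (Fin d) k) :
    rename (⇑(π * ρ)) p = rename π (rename ρ p) := by
  rw [rename_rename]
  rfl

theorem product_of_stabilizers {k : Type*} [Field k] {d : ℕ}
    (f g : MvPolynomial (Fin d) k)
    (hstab : ∀ σ : Equiv.Perm (Fin d), ∃ γ ∈ kStab f, ∃ δ ∈ kStab g, σ = γ * δ) :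
    psi f * psi g = psi (f * g) := by
  apply le_antisymm
  · rw [psi, psi, Ideal.span_mul_span', Ideal.span_le]
    rintro p ⟨a, ⟨σ, rfl⟩, b, ⟨τ, rfl⟩, rfl⟩
    show rename (⇑σ) f * rename (⇑τ) g ∈ psi (f * g)
    obtain ⟨γ, ⟨c, hc, hcf⟩, δ, ⟨c', hc', hcg⟩, hστ⟩ := hstab (σ⁻¹ * τ)
    have hτ : τ = σ * γ * δ := by
      rw [mul_assoc, ← hστ]; group
    have h1 : rename (⇑(σ * γ)) f = c • rename σ f := by
      rw [rename_perm_mul, hcf, map_smul]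
    have h2 : rename (⇑(σ * γ)) g = c'⁻¹ • rename τ g := by
      rw [hτ, rename_perm_mul (σ * γ) δ, hcg, map_smul, smul_smul,
        inv_mul_cancel₀ hc', one_smul]
    have key : rename (⇑(σ * γ)) (f * g) = (c * c'⁻¹) • (rename σ f * rename τ g) := by
      rw [map_mul, h1, h2, smul_mul_smul_comm]
    have hmem : rename (⇑(σ * γ)) (f * g) ∈ psi (f * g) :=
      Ideal.subset_span ⟨σ * γ, rfl⟩
    have : (c⁻¹ * c') • rename (⇑(σ * γ)) (f * g) = rename σ f * rename τ g := by
      rw [key, smul_smul]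
      rw [show (c⁻¹ * c') * (c * c'⁻¹) = (c⁻¹ * c) * (c' * c'⁻¹) by ring,
        inv_mul_cancel₀ hc, mul_inv_cancel₀ hc', one_mul, one_smul]
    rw [← this, MvPolynomial.smul_eq_C_mul]
    exact Ideal.mul_mem_left _ _ hmem
  · rw [psi, Ideal.span_le]
    rintro p ⟨σ, rfl⟩
    simp only [map_mul]
    exact Ideal.mul_mem_mul (Ideal.subset_span ⟨σ, rfl⟩) (Ideal.subset_span ⟨σ, rfl⟩)
end

section
/- Let f ∈ k[x_1,x_2] be a nonzero homogeneous polynomial of degree k, let σ = (1 2), let g = gcd(f, σ·f), and let ℓ = deg(f/g). Then the Hilbert function of the ideal I = (f, σ·f) satisfies H_I(n) = 2·H_R(n−k) − H_R(n−k−ℓ) for all integers n, where R = k[x_1,x_2] and H_R(i) = max(i+1, 0). -/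
open MvPolynomial

noncomputable section PsiAux

variable {σ R : Type*} [CommSemiring R]

/-- Map sending `X i` to `C (X i) * t`, collecting homogeneous components as coefficients. -/
def psiAux : MvPolynomial σ R →ₐ[R] Polynomial (MvPolynomial σ R) :=
  aeval fun i => Polynomial.C (X i) * Polynomial.X

lemma psiAux_monomial (d : σ →₀ ℕ) (c : R) :
    psiAux (monomial d c) = Polynomial.C (monomial d c) * Polynomial.X ^ d.degree := by
  rw [psiAux, aeval_monomial]
  have h1 : (d.prod fun i k => (Polynomial.C (X i) * Polynomial.X : Polynomial (MvPolynomial σ R)) ^ k)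
      = Polynomial.C (d.prod fun i k => (X i : MvPolynomial σ R) ^ k) * Polynomial.X ^ d.degree := by
    rw [Finsupp.prod, Finsupp.prod, Finsupp.degree_apply, map_prod, ← Finset.prod_pow_eq_pow_sum,
      ← Finset.prod_mul_distrib]
    refine Finset.prod_congr rfl fun i _ => ?_
    rw [mul_pow, Polynomial.C_pow]
  rw [h1, monomial_eq]
  have h2 : (algebraMap R (Polynomial (MvPolynomial σ R))) c = Polynomial.C (C c) := rfl
  rw [h2, ← mul_assoc, ← Polynomial.C_mul]

lemma psiAux_coeff (p : MvPolynomial σ R) (j : ℕ) :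
    (psiAux p).coeff j = homogeneousComponent j p := by
  conv_lhs => rw [as_sum p]
  rw [map_sum, Polynomial.finset_sum_coeff, homogeneousComponent_apply, Finset.sum_filter]
  refine Finset.sum_congr rfl fun d _ => ?_
  rw [psiAux_monomial, Polynomial.coeff_C_mul_X_pow]
  simp only [eq_comm]

end PsiAux

section FactorHom
variable {σ R : Type*} [CommRing R] [IsDomain R]

lemma psiAux_ne_zero {p : MvPolynomial σ R} (hp : p ≠ 0) : psiAux p ≠ 0 := by
  intro h0
  apply hp
  rw [← sum_homogeneousComponent p]
  refine Finset.sum_eq_zero fun i _ => ?_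
  rw [← psiAux_coeff, h0, Polynomial.coeff_zero]

omit [IsDomain R] in
lemma isHomogeneous_of_components {p : MvPolynomial σ R} {j : ℕ}
    (h : ∀ i, i ≠ j → homogeneousComponent i p = 0) : p.IsHomogeneous j := by
  have hsum := sum_homogeneousComponent p
  rw [Finset.sum_eq_single j (fun i _ hij => h i hij) (fun hj => homogeneousComponent_eq_zero j p
    (by simpa using hj))] at hsum
  rw [← hsum]; exact homogeneousComponent_isHomogeneous j p

/-- Over a domain, factors of a nonzero homogeneous polynomial are homogeneous. -/
lemma isHomogeneous_of_mul {a b : MvPolynomial σ R} {m : ℕ} (ha : a ≠ 0) (hb : b ≠ 0)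
    (h : (a * b).IsHomogeneous m) :
    ∃ i j, i + j = m ∧ a.IsHomogeneous i ∧ b.IsHomogeneous j := by
  classical
  have hab : a * b ≠ 0 := mul_ne_zero ha hb
  have hpsiab : psiAux (a * b) = Polynomial.monomial m (a * b) := by
    ext j
    rw [psiAux_coeff, Polynomial.coeff_monomial,
      homogeneousComponent_of_mem ((mem_homogeneousSubmodule m (a*b)).2 h)]
    simp only [eq_comm]
  have hpa := psiAux_ne_zero ha
  have hpb := psiAux_ne_zero hb
  have hmul : psiAux a * psiAux b = Polynomial.monomial m (a * b) := by
    rw [← map_mul, hpsiab]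
  have hdeg : (psiAux a).natDegree + (psiAux b).natDegree = m := by
    rw [← Polynomial.natDegree_mul hpa hpb, hmul, Polynomial.natDegree_monomial, if_neg hab]
  have htr : (psiAux a).natTrailingDegree + (psiAux b).natTrailingDegree = m := by
    rw [← Polynomial.natTrailingDegree_mul hpa hpb, hmul, Polynomial.natTrailingDegree_monomial hab]
  have hta := Polynomial.natTrailingDegree_le_natDegree (psiAux a)
  have htb := Polynomial.natTrailingDegree_le_natDegree (psiAux b)
  refine ⟨(psiAux a).natDegree, (psiAux b).natDegree, hdeg, ?_, ?_⟩
  · refine isHomogeneous_of_components fun i hij => ?_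
    rw [← psiAux_coeff]
    rcases lt_or_gt_of_ne hij with hlt | hgt
    · exact Polynomial.coeff_eq_zero_of_lt_natTrailingDegree (by omega)
    · exact Polynomial.coeff_eq_zero_of_natDegree_lt hgt
  · refine isHomogeneous_of_components fun i hij => ?_
    rw [← psiAux_coeff]
    rcases lt_or_gt_of_ne hij with hlt | hgt
    · exact Polynomial.coeff_eq_zero_of_lt_natTrailingDegree (by omega)
    · exact Polynomial.coeff_eq_zero_of_natDegree_lt hgt

end FactorHom

noncomputable section Dim2
variable (K : Type*) [Field K]

lemma degree_fin2 (d : Fin 2 →₀ ℕ) : d.degree = d 0 + d 1 := by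
  rw [Finsupp.degree_apply, Finset.sum_subset (Finset.subset_univ d.support)
    (fun i _ hi => Finsupp.notMem_support_iff.mp hi), Fin.sum_univ_two]

def fin2DegEquiv (n : ℕ) : {d : Fin 2 →₀ ℕ // d.degree = n} ≃ Fin (n+1) where
  toFun d := ⟨d.1 0, by have h := degree_fin2 d.1; have := d.2; omega⟩
  invFun i := ⟨Finsupp.single 0 i.1 + Finsupp.single 1 (n - i.1), by
    rw [degree_fin2]
    have := i.2
    simp [Finsupp.single_apply]
    omega⟩
  left_inv d := by
    ext x
    have h := degree_fin2 d.1
    have h2 := d.2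
    fin_cases x <;> simp [Finsupp.single_apply] <;> omega
  right_inv i := by
    have := i.2
    ext
    simp [Finsupp.single_apply]

def homSubEquiv (n : ℕ) :
    homogeneousSubmodule (Fin 2) K n ≃ₗ[K] (Fin (n+1) → K) :=
  (((LinearEquiv.ofEq _ _ (homogeneousSubmodule_eq_finsupp_supported (Fin 2) K n)).trans
    (AddMonoidAlgebra.supportedEquivFinsupp _)).trans
    (Finsupp.domLCongr (fin2DegEquiv n))).trans
    (Finsupp.linearEquivFunOnFinite K K (Fin (n+1)))

instance homSub_fd (n : ℕ) : FiniteDimensional K (homogeneousSubmodule (Fin 2) K n) :=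
  Module.Finite.equiv (homSubEquiv K n).symm

lemma finrank_homSub (n : ℕ) :
    Module.finrank K (homogeneousSubmodule (Fin 2) K n) = n + 1 := by
  rw [LinearEquiv.finrank_eq (homSubEquiv K n), Module.finrank_fin_fun]

end Dim2

section CompMul
variable {σ R : Type*} [CommSemiring R]

lemma homogeneousComponent_mul_homogeneous {f : MvPolynomial σ R} {kdeg : ℕ}
    (hf : f.IsHomogeneous kdeg) (a : MvPolynomial σ R) (m : ℕ) :
    homogeneousComponent (kdeg + m) (a * f) = homogeneousComponent m a * f := by
  classical
  conv_lhs => rw [← sum_homogeneousComponent a, Finset.sum_mul]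
  rw [map_sum]
  have key : ∀ i, homogeneousComponent (kdeg + m) (homogeneousComponent i a * f)
      = if i = m then homogeneousComponent i a * f else 0 := by
    intro i
    rw [homogeneousComponent_of_mem ((mem_homogeneousSubmodule _ _).2
      ((homogeneousComponent_isHomogeneous i a).mul hf))]
    by_cases him : i = m
    · rw [if_pos (by omega), if_pos him]
    · rw [if_neg (by omega), if_neg him]
  simp_rw [key]
  rw [Finset.sum_ite_eq' (Finset.range (a.totalDegree + 1)) m]
  split_ifs with h
  · rfl
  · rw [homogeneousComponent_eq_zero m a (by simpa using h), zero_mul]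

lemma homogeneousComponent_mul_homogeneous_lt {f : MvPolynomial σ R} {kdeg : ℕ}
    (hf : f.IsHomogeneous kdeg) (a : MvPolynomial σ R) {n : ℕ} (hn : n < kdeg) :
    homogeneousComponent n (a * f) = 0 := by
  classical
  conv_lhs => rw [← sum_homogeneousComponent a, Finset.sum_mul]
  rw [map_sum]
  refine Finset.sum_eq_zero fun i _ => ?_
  rw [homogeneousComponent_of_mem ((mem_homogeneousSubmodule _ _).2
    ((homogeneousComponent_isHomogeneous i a).mul hf)), if_neg (by omega)]

end CompMul

section MulMap
variable {K : Type*} [Field K]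

/-- Multiplication by a homogeneous polynomial as a linear map between homogeneous components. -/
noncomputable def mulHomMap (p : MvPolynomial (Fin 2) K) {d : ℕ} (hp : p.IsHomogeneous d) (e : ℕ) :
    homogeneousSubmodule (Fin 2) K e →ₗ[K] MvPolynomial (Fin 2) K :=
  (LinearMap.mulLeft K p).comp (homogeneousSubmodule (Fin 2) K e).subtype

end MulMap

theorem hilbert_function_two_variable_psi {k : Type*} [Field k] {kdeg ℓ : ℕ}
    (f : MvPolynomial (Fin 2) k) (hf0 : f ≠ 0) (hfhom : f.IsHomogeneous kdeg)
    (g : MvPolynomial (Fin 2) k)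
    (hgf : g ∣ f) (hgσ : g ∣ rename (Equiv.swap 0 1) f)
    (hgcd : ∀ h : MvPolynomial (Fin 2) k, h ∣ f → h ∣ rename (Equiv.swap 0 1) f → h ∣ g)
    (q : MvPolynomial (Fin 2) k) (hq : f = g * q) (hq0 : q ≠ 0)
    (hqhom : q.IsHomogeneous ℓ)
    (I : Ideal (MvPolynomial (Fin 2) k))
    (hI : I = Ideal.span {f, rename (Equiv.swap 0 1) f}) :
    ∀ n : ℕ,
      (Module.finrank k
          ↥(Submodule.restrictScalars k I ⊓ homogeneousSubmodule (Fin 2) k n) : ℤ) =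
        2 * max ((n : ℤ) - kdeg + 1) 0 - max ((n : ℤ) - kdeg - ℓ + 1) 0 := by
  classical
  set σf := rename (Equiv.swap (0 : Fin 2) 1) f with hσf_def
  have hσf0 : σf ≠ 0 := by
    intro h
    exact hf0 (by
      have := rename_injective (R := k) (Equiv.swap (0 : Fin 2) 1) (Equiv.swap 0 1).injective
      exact this (by simpa using h))
  have hσfhom : σf.IsHomogeneous kdeg := hfhom.rename_isHomogeneous
  have hg0 : g ≠ 0 := fun h => hf0 (by rw [hq, h, zero_mul])
  obtain ⟨r, hr⟩ := hgσ
  have hr0 : r ≠ 0 := fun h => hσf0 (by rw [hr, h, mul_zero])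
  -- g and r are homogeneous
  obtain ⟨dg, j, hdgj, hghom, hqhom'⟩ := isHomogeneous_of_mul hg0 hq0 (hq ▸ hfhom)
  have hjℓ : j = ℓ := hqhom'.inj_right hqhom hq0
  obtain ⟨dg', dr, hdgr, hghom', hrhom'⟩ := isHomogeneous_of_mul hg0 hr0 (hr ▸ hσfhom)
  have hdg' : dg' = dg := hghom'.inj_right hghom hg0
  have hdrℓ : dr = ℓ := by omega
  have hrhom : r.IsHomogeneous ℓ := hdrℓ ▸ hrhom'
  have hdgℓ : dg + ℓ = kdeg := by omega
  -- q and r have no common prime factors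
  have hcop : ∀ d : MvPolynomial (Fin 2) k, d ∣ q → d ∣ r → ¬ Prime d := by
    intro d hdq hdr hdp
    have h1 : g * d ∣ f := hq ▸ mul_dvd_mul_left g hdq
    have h2 : g * d ∣ σf := hr ▸ mul_dvd_mul_left g hdr
    obtain ⟨t, ht⟩ := hgcd (g * d) h1 h2
    have : d * t = 1 := by
      apply mul_left_cancel₀ hg0
      rw [← mul_assoc, ← ht, mul_one]
    exact hdp.not_isUnit (IsUnit.of_mul_eq_one t this)
  have hqd : ∀ b : MvPolynomial (Fin 2) k, q ∣ b * r → q ∣ b := fun b hb =>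
    UniqueFactorizationMonoid.dvd_of_dvd_mul_right_of_no_prime_factors hq0
      (fun hdq hdr => hcop _ hdq hdr) (mul_comm b r ▸ hb)
  intro n
  by_cases hn : n < kdeg
  · -- low degree: the intersection is trivial
    have hbot : Submodule.restrictScalars k I ⊓ homogeneousSubmodule (Fin 2) k n = ⊥ := by
      rw [eq_bot_iff]
      rintro x ⟨hxI, hxh⟩
      simp only [Submodule.restrictScalars_mem, hI] at hxI
      obtain ⟨a, b, hab⟩ := Ideal.mem_span_pair.mp hxI
      have hx : x = homogeneousComponent n x := by
        rw [homogeneousComponent_of_mem hxh, if_pos rfl]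
      rw [Submodule.mem_bot, hx, ← hab, map_add,
        homogeneousComponent_mul_homogeneous_lt hfhom a hn,
        homogeneousComponent_mul_homogeneous_lt hσfhom b hn, add_zero]
    rw [hbot]
    have h1 : max ((n : ℤ) - kdeg + 1) 0 = 0 := max_eq_right (by push_cast; omega)
    have h2 : max ((n : ℤ) - kdeg - ℓ + 1) 0 = 0 := max_eq_right (by push_cast; omega)
    simp [h1, h2]
  · obtain ⟨m, rfl⟩ : ∃ m, n = kdeg + m := ⟨n - kdeg, by omega⟩
    -- the linear map (a, b) ↦ a f + b σf
    set Φ : (homogeneousSubmodule (Fin 2) k m × homogeneousSubmodule (Fin 2) k m)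
        →ₗ[k] MvPolynomial (Fin 2) k :=
      LinearMap.coprod (mulHomMap f hfhom m) (mulHomMap σf hσfhom m) with hΦ
    have hΦ_apply : ∀ p, Φ p = f * p.1.1 + σf * p.2.1 := fun p => rfl
    have hrange : LinearMap.range Φ
        = Submodule.restrictScalars k I ⊓ homogeneousSubmodule (Fin 2) k (kdeg + m) := by
      apply le_antisymm
      · rintro x ⟨⟨a, b⟩, rfl⟩
        rw [hΦ_apply]
        constructor
        · simp only [Submodule.restrictScalars_mem, hI]
          exact Ideal.mem_span_pair.mpr ⟨a.1, b.1, by ring⟩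
        · exact ((hfhom.mul a.2).add (hσfhom.mul b.2))
      · rintro x ⟨hxI, hxh⟩
        simp only [Submodule.restrictScalars_mem, hI] at hxI
        obtain ⟨a, b, hab⟩ := Ideal.mem_span_pair.mp hxI
        refine ⟨(⟨homogeneousComponent m a, homogeneousComponent_mem m a⟩,
          ⟨homogeneousComponent m b, homogeneousComponent_mem m b⟩), ?_⟩
        rw [hΦ_apply]
        have hx : x = homogeneousComponent (kdeg + m) x := by
          rw [homogeneousComponent_of_mem hxh, if_pos rfl]
        rw [hx, ← hab, map_add, homogeneousComponent_mul_homogeneous hfhom a m,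
          homogeneousComponent_mul_homogeneous hσfhom b m]
        ring
    have hrank := LinearMap.finrank_range_add_finrank_ker Φ
    rw [hrange] at hrank
    have hdom : Module.finrank k (homogeneousSubmodule (Fin 2) k m
        × homogeneousSubmodule (Fin 2) k m) = (m + 1) + (m + 1) := by
      rw [Module.finrank_prod, finrank_homSub]
    rw [hdom] at hrank
    -- analyze the kernel
    have hker_mem : ∀ p : homogeneousSubmodule (Fin 2) k m × homogeneousSubmodule (Fin 2) k m,
        p ∈ LinearMap.ker Φ → ∃ c : MvPolynomial (Fin 2) k,
          p.2.1 = q * c ∧ p.1.1 = -(r * c) := by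
      rintro ⟨a, b⟩ hab
      rw [LinearMap.mem_ker, hΦ_apply] at hab
      have key : a.1 * q = -(b.1 * r) := by
        apply mul_left_cancel₀ hg0
        have h0 : f * a.1 + σf * b.1 = 0 := hab
        rw [hq, hr] at h0
        linear_combination h0
      have hdvd : q ∣ b.1 := hqd b.1 ⟨-a.1, by linear_combination key⟩
      obtain ⟨c, hc⟩ := hdvd
      refine ⟨c, hc, ?_⟩
      apply mul_right_cancel₀ hq0
      rw [key, hc]
      ring
    by_cases hmℓ : m < ℓ
    · -- kernel is trivial
      have hker : LinearMap.ker Φ = ⊥ := by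
        rw [eq_bot_iff]
        rintro ⟨a, b⟩ hab
        obtain ⟨c, hc, ha⟩ := hker_mem _ hab
        have hb0 : b.1 = 0 := by
          by_contra hb0
          have hc0 : c ≠ 0 := fun h => hb0 (by rw [hc, h, mul_zero])
          obtain ⟨i, j, hij, hqi, hcj⟩ := isHomogeneous_of_mul hq0 hc0 (hc ▸ b.2)
          have : i = ℓ := hqi.inj_right hqhom hq0
          omega
        have hc0 : c = 0 := by
          by_contra hc0
          exact hc0 (by
            have := hc
            rw [hb0] at this
            exact (mul_eq_zero.mp this.symm).resolve_left hq0)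
        have ha0 : a.1 = 0 := by rw [ha, hc0, mul_zero, neg_zero]
        simp only [Submodule.mem_bot, Prod.ext_iff]
        exact ⟨Subtype.ext ha0, Subtype.ext hb0⟩
      rw [hker, finrank_bot] at hrank
      have h1 : max ((kdeg + m : ℕ) - (kdeg : ℤ) + 1) 0 = m + 1 := by
        rw [max_eq_left (by push_cast; omega)]; push_cast; ring
      have h2 : max ((kdeg + m : ℕ) - (kdeg : ℤ) - ℓ + 1) 0 = 0 :=
        max_eq_right (by push_cast; omega)
      rw [h1, h2]
      push_cast
      omega
    · obtain ⟨m', rfl⟩ : ∃ m', m = ℓ + m' := ⟨m - ℓ, by omega⟩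
      -- kernel is isomorphic to the degree-m' component, via c ↦ (-(r c), q c)
      set Ψ : homogeneousSubmodule (Fin 2) k m' →ₗ[k]
          (homogeneousSubmodule (Fin 2) k (ℓ + m') × homogeneousSubmodule (Fin 2) k (ℓ + m'))
        := LinearMap.prod
          (-(LinearMap.codRestrict _ (mulHomMap r hrhom m')
            (fun c => hrhom.mul c.2)))
          (LinearMap.codRestrict _ (mulHomMap q hqhom m')
            (fun c => hqhom.mul c.2)) with hΨ
      have hΨ_apply : ∀ c, ((Ψ c).1.1 = -(r * c.1) ∧ (Ψ c).2.1 = q * c.1) := fun c => ⟨rfl, rfl⟩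
      have hΨinj : Function.Injective Ψ := by
        rw [← LinearMap.ker_eq_bot, eq_bot_iff]
        intro c hc
        rw [LinearMap.mem_ker] at hc
        have h2 : (Ψ c).2.1 = 0 := by rw [hc]; rfl
        rw [(hΨ_apply c).2] at h2
        have : c.1 = 0 := (mul_eq_zero.mp h2).resolve_left hq0
        simpa using Subtype.ext this
      have hkerΦ : LinearMap.ker Φ = LinearMap.range Ψ := by
        apply le_antisymm
        · rintro ⟨a, b⟩ hab
          obtain ⟨c, hc, ha⟩ := hker_mem _ hab
          have hchom : c.IsHomogeneous m' := by
            by_cases hc0 : c = 0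
            · rw [hc0]; exact isHomogeneous_zero _ _ _
            · obtain ⟨i, j, hij, hqi, hcj⟩ := isHomogeneous_of_mul hq0 hc0 (hc ▸ b.2)
              have : i = ℓ := hqi.inj_right hqhom hq0
              have : j = m' := by omega
              rwa [← this]
          refine ⟨⟨c, hchom⟩, ?_⟩
          have h1 := (hΨ_apply ⟨c, hchom⟩).1
          have h2 := (hΨ_apply ⟨c, hchom⟩).2
          rw [Prod.ext_iff]
          exact ⟨Subtype.ext (h1.trans ha.symm), Subtype.ext (h2.trans hc.symm)⟩
        · rintro p ⟨c, rfl⟩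
          rw [LinearMap.mem_ker, hΦ_apply, (hΨ_apply c).1, (hΨ_apply c).2, hq, hr]
          ring
      have hkerrank : Module.finrank k (LinearMap.ker Φ) = m' + 1 := by
        rw [hkerΦ, LinearMap.finrank_range_of_inj hΨinj, finrank_homSub]
      rw [hkerrank] at hrank
      have h1 : max ((kdeg + (ℓ + m') : ℕ) - (kdeg : ℤ) + 1) 0 = (ℓ + m' : ℕ) + 1 := by
        rw [max_eq_left (by push_cast; omega)]; push_cast; ring
      have h2 : max ((kdeg + (ℓ + m') : ℕ) - (kdeg : ℤ) - ℓ + 1) 0 = (m' : ℤ) + 1 := by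
        rw [max_eq_left (by push_cast; omega)]; push_cast; ring
      rw [h1, h2]
      push_cast
      omega
end
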